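/- For every natural number n ≥ 1 and every complex number z ≠ 1, f_n(z) = (1−z)^n · L_n((1+z)/(1−z)), where L_n is the n-th Legendre polynomial defined by the Rodrigues formula L_n(x) = (1/(2^n · n!)) · (d/dx)^n [(x² − 1)^n]. -/

import Mathlib

open Polynomial

/-- The polynomial `f_n(z) = ∑_{j=0}^n (binom(n,j))^2 z^j` with complex coefficients. -/
noncomputable def hyperPoly (n : ℕ) : Polynomial ℂ :=
  ∑ j ∈ Finset.range (n + 1), Polynomial.C ((n.choose j : ℂ) ^ 2) * Polynomial.X ^ j

/-- The `n`-th Legendre polynomial, defined by the Rodrigues formula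
`L_n(x) = (1/(2^n · n!)) · (d/dx)^n [(x² − 1)^n]`. -/
noncomputable def legendrePoly (n : ℕ) : Polynomial ℂ :=
  Polynomial.C (1 / (2 ^ n * (n.factorial : ℂ))) *
    (Polynomial.derivative^[n] ((Polynomial.X ^ 2 - 1) ^ n))

/-- The `n`-th derivative of `(X² − 1)^n`, via the Leibniz rule applied to
`(X − 1)^n · (X + 1)^n`. -/
lemma key (n : ℕ) : (derivative^[n] (((X:ℂ[X])^2 - 1)^n)) =
    ∑ k ∈ Finset.range (n+1),
      ((n.factorial * (n.choose k)^2 : ℕ) : ℂ[X]) * ((X - 1)^k * (X + 1)^(n-k)) := by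
  have h2 : ((X:ℂ[X])^2 - 1)^n = (X - C 1)^n * (X + C 1)^n := by
    rw [← mul_pow]; simp only [Polynomial.C_1]; ring
  rw [h2, Polynomial.iterate_derivative_mul]
  refine Finset.sum_congr rfl fun k hk => ?_
  have hkn : k ≤ n := Nat.le_of_lt_succ (Finset.mem_range.mp hk)
  rw [Polynomial.iterate_derivative_X_sub_pow, Polynomial.iterate_derivative_X_add_pow,
    Nat.sub_sub_self hkn]
  have hcoef : n.choose k * (n.descFactorial (n - k) * n.descFactorial k)
      = n.factorial * (n.choose k)^2 := by
    rw [Nat.descFactorial_eq_factorial_mul_choose, Nat.descFactorial_eq_factorial_mul_choose,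
      Nat.choose_symm hkn, ← Nat.choose_mul_factorial_mul_factorial hkn]
    ring
  rw [smul_mul_smul_comm, smul_smul, hcoef]
  simp [nsmul_eq_mul]

/-- For every `n ≥ 1` and every complex `z ≠ 1`,
`f_n(z) = (1−z)^n · L_n((1+z)/(1−z))`. -/
theorem stmt_10 (n : ℕ) (hn : 1 ≤ n) (z : ℂ) (hz : z ≠ 1) :
    (hyperPoly n).eval z = (1 - z) ^ n * (legendrePoly n).eval ((1 + z) / (1 - z)) := by
  have hw : (1:ℂ) - z ≠ 0 := sub_ne_zero.mpr (Ne.symm hz)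
  set x : ℂ := (1+z)/(1-z) with hxdef
  have hx1 : x - 1 = 2*z/(1-z) := by rw [hxdef, div_sub_one hw]; ring
  have hx2 : x + 1 = 2/(1-z) := by rw [hxdef, div_add_one hw]; ring
  rw [legendrePoly, eval_mul, eval_C, key, eval_finset_sum]
  rw [Finset.mul_sum, Finset.mul_sum, hyperPoly, eval_finset_sum]
  refine Finset.sum_congr rfl fun k hk => ?_
  have hkn : k ≤ n := Nat.le_of_lt_succ (Finset.mem_range.mp hk)
  have hfac : (n.factorial : ℂ) ≠ 0 := Nat.cast_ne_zero.mpr n.factorial_ne_zero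
  simp only [eval_mul, eval_pow, eval_sub, eval_add, eval_X, eval_one, eval_C, eval_natCast,
    Polynomial.eval_natCast]
  rw [hx1, hx2]
  rw [div_pow, div_pow]
  push_cast
  field_simp
  rw [show (1-z)^n = (1-z)^k * (1-z)^(n-k) from by rw [← pow_add, Nat.add_sub_cancel' hkn],
    show (2:ℂ)^n = 2^k * 2^(n-k) from by rw [← pow_add, Nat.add_sub_cancel' hkn]]
  ring
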